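/- Let H be a commutative Hopf algebra, A a right H-comodule transposed Poisson algebra, and N a transposed Poisson A-module. Then N ⊗ H is a transposed Poisson A-module with actions a·(n⊗h) = a₍₀₎·n ⊗ a₍₁₎h and a⊳(n⊗h) = a₍₀₎⊳n ⊗ a₍₁₎h; in particular these actions satisfy the two compatibility identities 2{a,a'}·(n⊗h) = a⊳(a'·(n⊗h)) − a'⊳(a·(n⊗h)) and 2a·(a'⊳(n⊗h)) = (aa')⊳(n⊗h) + a'⊳(a·(n⊗h)). -/
import Mathlib


open TensorProduct

/-- A transposed Poisson algebra structure on a commutative unital `k`-algebra `A`: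
a Lie bracket satisfying the transposed Leibniz rule `2a{b,c} = {ab,c} + {b,ac}`. -/
structure TPA (k A : Type*) [Field k] [CharZero k] [CommRing A] [Algebra k A] where
  br : A →ₗ[k] A →ₗ[k] A
  skew : ∀ a b, br a b = - br b a
  jacobi : ∀ a b c, br a (br b c) = br (br a b) c + br b (br a c)
  leibniz : ∀ a b c, 2 * a * br b c = br (a * b) c + br b (a * c)

/-- The transposed Poisson center `A^A = {b | b{a,a'} = {ba,a'} for all a,a'}`. -/
def TPA.center {k A : Type*} [Field k] [CharZero k] [CommRing A] [Algebra k A]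
    (P : TPA k A) : Set A := {b | ∀ a a', b * P.br a a' = P.br (b * a) a'}

/-- A transposed Poisson `A`-module: an `A`-module action `sm` and a Lie `A`-module
action `lact` satisfying `2{a,b}·m = a⊳(b·m) − b⊳(a·m)` and
`2a·(b⊳m) = (ab)⊳m + b⊳(a·m)`. -/
structure TPMod (k A : Type*) [Field k] [CharZero k] [CommRing A] [Algebra k A]
    (P : TPA k A) (M : Type*) [AddCommGroup M] [Module k M] where
  sm : A →ₗ[k] M →ₗ[k] M
  lact : A →ₗ[k] M →ₗ[k] M
  sm_one : ∀ m, sm 1 m = m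
  sm_mul : ∀ a b m, sm (a * b) m = sm a (sm b m)
  lact_br : ∀ a b m, lact (P.br a b) m = lact a (lact b m) - lact b (lact a m)
  compat1 : ∀ a b m, 2 • sm (P.br a b) m = lact a (sm b m) - lact b (sm a m)
  compat2 : ∀ a b m, 2 • sm a (lact b m) = lact (a * b) m + lact b (sm a m)

section Aux

variable {k A H : Type*} [Field k] [CharZero k]
  [CommRing A] [Algebra k A] [CommRing H] [HopfAlgebra k H] (P : TPA k A)
  {N : Type*} [AddCommGroup N] [Module k N] (Pm : TPMod k A P N)

lemma aux_key1 (u v : A ⊗[k] H) (x : N ⊗[k] H) :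
    2 • TensorProduct.map₂ Pm.sm (LinearMap.mul k H)
        (TensorProduct.map₂ P.br (LinearMap.mul k H) u v) x =
      TensorProduct.map₂ Pm.lact (LinearMap.mul k H) u
        (TensorProduct.map₂ Pm.sm (LinearMap.mul k H) v x) -
      TensorProduct.map₂ Pm.lact (LinearMap.mul k H) v
        (TensorProduct.map₂ Pm.sm (LinearMap.mul k H) u x) := by
  induction u using TensorProduct.induction_on with
  | zero => simp
  | add u₁ u₂ h1 h2 =>
      simp only [map_add, LinearMap.add_apply, smul_add] at *
      rw [h1, h2]; abel
  | tmul a h =>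
    induction v using TensorProduct.induction_on with
    | zero => simp
    | add v₁ v₂ h1 h2 =>
        simp only [map_add, LinearMap.add_apply, smul_add] at *
        rw [h1, h2]; abel
    | tmul b g =>
      induction x using TensorProduct.induction_on with
      | zero => simp
      | add x₁ x₂ h1 h2 =>
          simp only [map_add, smul_add] at *
          rw [h1, h2]; abel
      | tmul m t =>
          simp only [TensorProduct.map₂_apply_tmul, TensorProduct.map_tmul,
            LinearMap.mul_apply']
          rw [show (2:ℕ) • (Pm.sm (P.br a b) m ⊗ₜ[k] (h * g * t)) =
              (2 • Pm.sm (P.br a b) m) ⊗ₜ[k] (h * g * t) from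
              (TensorProduct.smul_tmul' 2 _ _).symm,
            Pm.compat1, TensorProduct.sub_tmul,
            show g * (h * t) = h * g * t by ring,
            show h * (g * t) = h * g * t by ring]

lemma aux_key2 (u v : A ⊗[k] H) (x : N ⊗[k] H) :
    2 • TensorProduct.map₂ Pm.sm (LinearMap.mul k H) u
        (TensorProduct.map₂ Pm.lact (LinearMap.mul k H) v x) =
      TensorProduct.map₂ Pm.lact (LinearMap.mul k H) (u * v) x +
      TensorProduct.map₂ Pm.lact (LinearMap.mul k H) v
        (TensorProduct.map₂ Pm.sm (LinearMap.mul k H) u x) := by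
  induction u using TensorProduct.induction_on with
  | zero => simp
  | add u₁ u₂ h1 h2 =>
      simp only [map_add, add_mul, LinearMap.add_apply, smul_add] at *
      rw [h1, h2]; abel
  | tmul a h =>
    induction v using TensorProduct.induction_on with
    | zero => simp
    | add v₁ v₂ h1 h2 =>
        simp only [map_add, mul_add, LinearMap.add_apply, smul_add] at *
        rw [h1, h2]; abel
    | tmul b g =>
      induction x using TensorProduct.induction_on with
      | zero => simp
      | add x₁ x₂ h1 h2 =>
          simp only [map_add, smul_add] at *
          rw [h1, h2]; abel
      | tmul m t =>
          simp only [TensorProduct.map₂_apply_tmul, TensorProduct.map_tmul,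
            LinearMap.mul_apply', Algebra.TensorProduct.tmul_mul_tmul]
          rw [show (2:ℕ) • (Pm.sm a (Pm.lact b m) ⊗ₜ[k] (h * (g * t))) =
              (2 • Pm.sm a (Pm.lact b m)) ⊗ₜ[k] (h * (g * t)) from
              (TensorProduct.smul_tmul' 2 _ _).symm,
            Pm.compat2, TensorProduct.add_tmul,
            show h * g * t = h * (g * t) by ring,
            show g * (h * t) = h * (g * t) by ring]

end Aux

theorem tensor_with_H_is_TPMod {k A H : Type*} [Field k] [CharZero k]
    [CommRing A] [Algebra k A] [CommRing H] [HopfAlgebra k H] (P : TPA k A)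
    (ρA : A →ₗ[k] A ⊗[k] H)
    -- `ρA` is a comodule structure map on `A`
    (hAcoassoc : ∀ a : A,
      (TensorProduct.assoc k A H H) ((TensorProduct.map ρA LinearMap.id) (ρA a)) =
        (TensorProduct.map LinearMap.id (Coalgebra.comul (R := k))) (ρA a))
    (hAcounit : ∀ a : A,
      (TensorProduct.rid k A)
        ((TensorProduct.map LinearMap.id (Coalgebra.counit (R := k))) (ρA a)) = a)
    -- `A` is an `H`-comodule algebra
    (hAone : ρA 1 = 1) (hAmul : ∀ a b : A, ρA (a * b) = ρA a * ρA b)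
    -- compatibility of the coaction with the bracket: `ρ({a,a'}) = {a₀,a'₀} ⊗ a₁a'₁`
    (hAbr : ∀ a b : A, ρA (P.br a b) =
      TensorProduct.map₂ P.br (LinearMap.mul k H) (ρA a) (ρA b))
    {N : Type*} [AddCommGroup N] [Module k N] (Pm : TPMod k A P N) :
    -- the actions `a · (n ⊗ h) = a₀·n ⊗ a₁h` and `a ⊳ (n ⊗ h) = a₀⊳n ⊗ a₁h`
    -- on `N ⊗ H` satisfy the two transposed-Poisson-module compatibilities
    ∀ (a a' : A) (x : N ⊗[k] H),
      (2 • TensorProduct.map₂ Pm.sm (LinearMap.mul k H) (ρA (P.br a a')) x =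
        TensorProduct.map₂ Pm.lact (LinearMap.mul k H) (ρA a)
          (TensorProduct.map₂ Pm.sm (LinearMap.mul k H) (ρA a') x) -
        TensorProduct.map₂ Pm.lact (LinearMap.mul k H) (ρA a')
          (TensorProduct.map₂ Pm.sm (LinearMap.mul k H) (ρA a) x)) ∧
      (2 • TensorProduct.map₂ Pm.sm (LinearMap.mul k H) (ρA a)
          (TensorProduct.map₂ Pm.lact (LinearMap.mul k H) (ρA a') x) =
        TensorProduct.map₂ Pm.lact (LinearMap.mul k H) (ρA (a * a')) x +
        TensorProduct.map₂ Pm.lact (LinearMap.mul k H) (ρA a')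
          (TensorProduct.map₂ Pm.sm (LinearMap.mul k H) (ρA a) x)) := by
  intro a a' x
  refine ⟨?_, ?_⟩
  · rw [hAbr]; exact aux_key1 P Pm (ρA a) (ρA a') x
  · rw [hAmul]; exact aux_key2 P Pm (ρA a) (ρA a') x
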